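/- Let R be a commutative ring with a distinguished subset R_+, and let A be an R-algebra that is free as an R-module with basis b : ι → A whose structure constants all lie in R_+ (i.e. for all i, j ∈ ι, writing b i · b j = Σ_k c^k_{ij} · b k, every coefficient c^k_{ij} lies in R_+). Let I ⊆ A be a two-sided ideal and let J = {i ∈ ι : b i ∈ I}; assume that I equals the R-submodule spanned by {b i : i ∈ J}. Then the images of the basis elements b i for i ∉ J under the projection π : A → A/I form an R-module basis of A/I, and all structure constants of the multiplication of A/I in this basis lie in R_+. -/

import Mathlib

/-- Positive bases descend to quotients by ideals that respect the basis.
`A` is an `R`-algebra, free as an `R`-module with basis `b` whose structure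
constants all lie in `Rp`.  `I` is a two-sided ideal (an `R`-submodule closed
under left and right multiplication by `A`), `J = {i | b i ∈ I}`, and `I` is
spanned by `{b i | i ∈ J}`.  Then the images of the `b i`, `i ∉ J`, form an
`R`-basis of `A/I` in which all structure constants of the multiplication of
`A/I` lie in `Rp`. -/
theorem positive_basis_quotient {R : Type*} [CommRing R] (Rp : Set R)
    {ι : Type*} {A : Type*} [Ring A] [Algebra R A] (b : Module.Basis ι R A)
    (hpos : ∀ i j k, b.repr (b i * b j) k ∈ Rp)
    (I : Submodule R A)
    (hleft : ∀ a : A, ∀ x ∈ I, a * x ∈ I)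
    (hright : ∀ a : A, ∀ x ∈ I, x * a ∈ I)
    (J : Set ι) (hJ : J = {i : ι | b i ∈ I})
    (hspan : I = Submodule.span R (b '' J)) :
    ∃ b' : Module.Basis {i : ι // i ∉ J} R (A ⧸ I),
      (∀ i : {i : ι // i ∉ J}, b' i = Submodule.Quotient.mk (b i)) ∧
      (∀ i j k : {i : ι // i ∉ J},
        b'.repr (Submodule.Quotient.mk (b i * b j)) k ∈ Rp) := by
  classical
  -- elements of I have repr supported in J
  have hker : ∀ x ∈ I, ∀ i : ι, i ∉ J → b.repr x i = 0 := by
    intro x hx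
    rw [hspan] at hx
    induction hx using Submodule.span_induction with
    | mem y hy =>
        obtain ⟨j, hj, rfl⟩ := hy
        intro i hi
        rw [b.repr_self, Finsupp.single_apply]
        split
        · next h => exact absurd (h ▸ hj) hi
        · rfl
    | zero => intro i _; simp
    | add x y _ _ hx hy => intro i hi; simp [hx i hi, hy i hi]
    | smul r x _ hx => intro i hi; simp [hx i hi]
  let f : A →ₗ[R] ({i : ι // i ∉ J} →₀ R) :=
    (Finsupp.lsubtypeDomain (fun i : ι => i ∉ J)) ∘ₗ (b.repr : A →ₗ[R] ι →₀ R)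
  have hf : ∀ (x : A) (k : {i : ι // i ∉ J}), f x k = b.repr x k := fun _ _ => rfl
  have hfb : ∀ (i : ι) (hi : i ∉ J), f (b i) = Finsupp.single ⟨i, hi⟩ 1 := by
    intro i hi
    ext k
    rw [hf, b.repr_self]
    simp [Finsupp.single_apply, Subtype.ext_iff]
  have hfbJ : ∀ i ∈ J, f (b i) = 0 := by
    intro i hi
    ext k
    rw [hf, b.repr_self, Finsupp.single_apply]
    simp only [Finsupp.coe_zero, Pi.zero_apply]
    split
    · next h => exact absurd (h ▸ hi) k.2
    · rfl
  have hfI : I ≤ LinearMap.ker f := by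
    intro x hx
    rw [LinearMap.mem_ker]
    ext k
    simpa [hf] using hker x hx k k.2
  let fbar := Submodule.liftQ I f hfI
  let g : ({i : ι // i ∉ J} →₀ R) →ₗ[R] (A ⧸ I) :=
    Finsupp.linearCombination R (fun i : {i : ι // i ∉ J} => Submodule.Quotient.mk (b i))
  have hg : ∀ k : {i : ι // i ∉ J}, g (Finsupp.single k 1) = Submodule.Quotient.mk (b k) := by
    intro k; simp [g]
  have h1 : fbar ∘ₗ g = LinearMap.id := by
    ext k
    simp only [LinearMap.comp_apply, LinearMap.id_apply, Finsupp.lsingle_apply]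
    rw [hg, Submodule.liftQ_apply, hfb k k.2]
  have h2 : g ∘ₗ fbar = LinearMap.id := by
    have : (g ∘ₗ fbar) ∘ₗ I.mkQ = LinearMap.id ∘ₗ I.mkQ := by
      apply b.ext
      intro i
      simp only [LinearMap.comp_apply, Submodule.mkQ_apply, LinearMap.id_apply,
        Submodule.liftQ_apply, fbar]
      by_cases hi : i ∈ J
      · rw [hfbJ i hi, map_zero]
        have hbi : b i ∈ I := by rw [hJ] at hi; exact hi
        exact ((Submodule.Quotient.mk_eq_zero I).mpr hbi).symm
      · rw [hfb i hi, hg]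
    ext x
    exact LinearMap.congr_fun this x
  let e : (A ⧸ I) ≃ₗ[R] ({i : ι // i ∉ J} →₀ R) := LinearEquiv.ofLinear fbar g h1 h2
  refine ⟨Module.Basis.ofRepr e, ?_, ?_⟩
  · intro i
    show e.symm (Finsupp.single i 1) = _
    show g (Finsupp.single i 1) = _
    exact hg i
  · intro i j k
    show e (Submodule.Quotient.mk (b i * b j)) k ∈ Rp
    show f (b i * b j) k ∈ Rp
    rw [hf]
    exact hpos i j k
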